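/- Let V, u, v : ℝ → ℝ with u and v twice differentiable, and suppose u″(x) = V(x)·u(x) and v″(x) = V(x)·v(x) for all x. Then for all x: (u²)″(x)·(v²)″(x) − ((u·v)″(x))² = 4·V(x)·(u′(x)·v(x) − u(x)·v′(x))². In particular, if the Wronskian u·v′ − u′·v is identically 1, then this expression equals 4·V(x). -/

import Mathlib

lemma deriv2_mul (f g : ℝ → ℝ) (hf : Differentiable ℝ f) (hf' : Differentiable ℝ (deriv f))
    (hg : Differentiable ℝ g) (hg' : Differentiable ℝ (deriv g)) (x : ℝ) :
    deriv (deriv (fun y : ℝ => f y * g y)) x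
      = deriv (deriv f) x * g x + 2 * (deriv f x * deriv g x) + f x * deriv (deriv g) x := by
  have h1 : deriv (fun y : ℝ => f y * g y) = fun y => deriv f y * g y + f y * deriv g y := by
    funext y; exact deriv_mul (hf y) (hg y)
  rw [h1, deriv_fun_add ((hf' x).fun_mul (hg x)) ((hf x).fun_mul (hg' x)),
    deriv_fun_mul (hf' x) (hg x), deriv_fun_mul (hf x) (hg' x)]
  ring

/-- Remark 1 after Theorem 4.1: for zero-energy solutions `u, v` of the
Schrödinger equation (`u″ = V·u`, `v″ = V·v`),
`(u²)″·(v²)″ − ((u·v)″)² = 4·V·(u′·v − u·v′)²`; in particular this equals `4V`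
when the Wronskian `u·v′ − u′·v` is identically `1`. -/
theorem stmt17 (V u v : ℝ → ℝ)
    (hu : Differentiable ℝ u) (hu' : Differentiable ℝ (deriv u))
    (hv : Differentiable ℝ v) (hv' : Differentiable ℝ (deriv v))
    (huV : ∀ x : ℝ, deriv (deriv u) x = V x * u x)
    (hvV : ∀ x : ℝ, deriv (deriv v) x = V x * v x) :
    (∀ x : ℝ, deriv (deriv (fun y : ℝ => u y ^ 2)) x
        * deriv (deriv (fun y : ℝ => v y ^ 2)) x
        - (deriv (deriv (fun y : ℝ => u y * v y)) x) ^ 2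
      = 4 * V x * (deriv u x * v x - u x * deriv v x) ^ 2)
    ∧ ((∀ x : ℝ, u x * deriv v x - deriv u x * v x = 1) →
        ∀ x : ℝ, deriv (deriv (fun y : ℝ => u y ^ 2)) x
            * deriv (deriv (fun y : ℝ => v y ^ 2)) x
            - (deriv (deriv (fun y : ℝ => u y * v y)) x) ^ 2
          = 4 * V x) := by
  have key : ∀ x : ℝ, deriv (deriv (fun y : ℝ => u y ^ 2)) x
        * deriv (deriv (fun y : ℝ => v y ^ 2)) x
        - (deriv (deriv (fun y : ℝ => u y * v y)) x) ^ 2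
      = 4 * V x * (deriv u x * v x - u x * deriv v x) ^ 2 := by
    intro x
    have e1 : (fun y : ℝ => u y ^ 2) = fun y => u y * u y := by funext y; ring
    have e2 : (fun y : ℝ => v y ^ 2) = fun y => v y * v y := by funext y; ring
    rw [e1, e2, deriv2_mul u u hu hu' hu hu' x, deriv2_mul v v hv hv' hv hv' x,
      deriv2_mul u v hu hu' hv hv' x, huV x, hvV x]
    ring
  refine ⟨key, fun hw x => ?_⟩
  rw [key x]
  have h : deriv u x * v x - u x * deriv v x = -1 := by linarith [hw x]
  rw [h]; ring
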